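/- arXiv:1401.1709 — 9 statements merged into one kernel-verified Lean document; each statement's English description precedes it below -/
import Mathlib

section
/- Let (X,d) be a regular semimetric space. Then any two distinct points of X can be separated by disjoint open balls: if x ≠ y, then there exists r > 0 such that B(x,r) ∩ B(y,r) = ∅, where B(p,r) = { q ∈ X : d(p,q) < r }. In particular, the topology induced by the open balls is Hausdorff. -/
open Filter Topology

/-- A semimetric on `X`: a symmetric nonnegative function vanishing exactly on the diagonal. -/
def IsSemimetric {X : Type*} (d : X → X → NNReal) : Prop :=
  (∀ x y, d x y = d y x) ∧ (∀ x y, d x y = 0 ↔ x = y)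

/-- The basic triangle function `Φ_d(u,v) = sup { d x y | ∃ p, d p x ≤ u ∧ d p y ≤ v }`. -/
noncomputable def basicTriangle {X : Type*} (d : X → X → NNReal) (u v : ENNReal) : ENNReal :=
  sSup {w : ENNReal | ∃ x y p : X, w = (d x y : ENNReal) ∧ (d p x : ENNReal) ≤ u ∧ (d p y : ENNReal) ≤ v}

/-- `Φ` is a triangle function for `d`: symmetric, monotone increasing in both arguments,
`Φ(0,0) = 0`, and the generalized triangle inequality holds. -/
def IsTriangleFun {X : Type*} (d : X → X → NNReal) (Φ : ENNReal → ENNReal → ENNReal) : Prop :=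
  (∀ u v, Φ u v = Φ v u) ∧
  (∀ v, Monotone fun u => Φ u v) ∧
  (∀ u, Monotone fun v => Φ u v) ∧
  Φ 0 0 = 0 ∧
  ∀ x y z : X, (d x y : ENNReal) ≤ Φ (d x z) (d y z)

/-- A semimetric is regular if its basic triangle function is continuous at the origin. -/
def IsRegularSemimetric {X : Type*} (d : X → X → NNReal) : Prop :=
  ContinuousAt (fun p : ENNReal × ENNReal => basicTriangle d p.1 p.2) (0, 0)

/-- Convergence of a sequence with respect to a semimetric. -/
def SConv {X : Type*} (d : X → X → NNReal) (x : ℕ → X) (a : X) : Prop :=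
  Tendsto (fun n => d (x n) a) atTop (𝓝 0)

/-- Cauchy property of a sequence with respect to a semimetric. -/
def SCauchy {X : Type*} (d : X → X → NNReal) (x : ℕ → X) : Prop :=
  ∀ ε : NNReal, 0 < ε → ∃ N, ∀ n m, N ≤ n → N ≤ m → d (x n) (x m) < ε

/-- Completeness of a semimetric space: every Cauchy sequence converges. -/
def SComplete {X : Type*} (d : X → X → NNReal) : Prop :=
  ∀ x : ℕ → X, SCauchy d x → ∃ a, SConv d x a

/-- The smallest Lipschitz modulus `L_{d₁,d₂}(t) = sup { d₁ x y | d₂ x y ≤ t }`. -/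
noncomputable def Lmod {X : Type*} (d₁ d₂ : X → X → NNReal) (t : ENNReal) : ENNReal :=
  sSup {w : ENNReal | ∃ x y : X, w = (d₁ x y : ENNReal) ∧ (d₂ x y : ENNReal) ≤ t}

/-- Equivalence of semimetrics: both minimal Lipschitz moduli tend to `0` at `0⁺`. -/
def SEquiv {X : Type*} (d₁ d₂ : X → X → NNReal) : Prop :=
  Tendsto (Lmod d₁ d₂) (𝓝[>] (0 : ENNReal)) (𝓝 0) ∧
  Tendsto (Lmod d₂ d₁) (𝓝[>] (0 : ENNReal)) (𝓝 0)

/-- A comparison function: monotone increasing with iterates tending to zero pointwise. -/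
def IsComparison (φ : NNReal → NNReal) : Prop :=
  Monotone φ ∧ ∀ t : NNReal, Tendsto (fun n => φ^[n] t) atTop (𝓝 0)

/-- `T` is a `φ`-contraction with respect to the semimetric `d`. -/
def IsPhiContraction {X : Type*} (d : X → X → NNReal) (φ : NNReal → NNReal) (T : X → X) : Prop :=
  ∀ x y, d (T x) (T y) ≤ φ (d x y)


theorem regular_separation {X : Type*} [Nonempty X]
    (d : X → X → NNReal) (hd : IsSemimetric d) (hreg : IsRegularSemimetric d)
    (x y : X) (hxy : x ≠ y) :
    ∃ r : NNReal, 0 < r ∧ {q : X | d x q < r} ∩ {q : X | d y q < r} = ∅ := by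
  have h0 : basicTriangle d 0 0 = 0 := by
    refine le_antisymm (sSup_le ?_) (zero_le)
    rintro w ⟨a, b, p, rfl, ha, hb⟩
    have hpa : p = a := (hd.2 p a).1 (by exact_mod_cast le_antisymm ha (zero_le))
    have hpb : p = b := (hd.2 p b).1 (by exact_mod_cast le_antisymm hb (zero_le))
    subst hpa; subst hpb
    simp [(hd.2 p p).2 rfl]
  have hten : Tendsto (fun u : ENNReal => basicTriangle d u u) (𝓝 0) (𝓝 0) := by
    have hdiag : Tendsto (fun u : ENNReal => ((u, u) : ENNReal × ENNReal)) (𝓝 0)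
        (𝓝 ((0 : ENNReal), (0 : ENNReal))) := by
      rw [nhds_prod_eq]; exact tendsto_id.prodMk tendsto_id
    have := hreg.tendsto
    rw [h0] at this
    exact this.comp hdiag
  have hdxy : (0 : ENNReal) < (d x y : ENNReal) := by
    have : d x y ≠ 0 := fun h => hxy ((hd.2 x y).1 h)
    exact_mod_cast pos_iff_ne_zero.2 this
  have hev : ∀ᶠ u in 𝓝 (0 : ENNReal), basicTriangle d u u < (d x y : ENNReal) :=
    hten.eventually (tendsto_id.eventually_lt_const hdxy)
  rcases (ENNReal.nhds_zero_basis.eventually_iff).1 hev with ⟨ε, hε, hεlt⟩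
  rcases ENNReal.lt_iff_exists_nnreal_btwn.1 hε with ⟨r, hr0, hrε⟩
  refine ⟨r, by exact_mod_cast hr0, ?_⟩
  ext q
  simp only [Set.mem_inter_iff, Set.mem_setOf_eq, Set.mem_empty_iff_false, iff_false]
  rintro ⟨hqx, hqy⟩
  have hmem : (d x y : ENNReal) ∈ {w : ENNReal | ∃ a b p : X,
      w = (d a b : ENNReal) ∧ (d p a : ENNReal) ≤ (r : ENNReal) ∧ (d p b : ENNReal) ≤ (r : ENNReal)} := by
    refine ⟨x, y, q, rfl, ?_, ?_⟩
    · rw [hd.1 q x]; exact_mod_cast hqx.le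
    · rw [hd.1 q y]; exact_mod_cast hqy.le
  have h1 : (d x y : ENNReal) ≤ basicTriangle d r r := le_sSup hmem
  exact absurd (h1.trans_lt (hεlt hrε)) (lt_irrefl _)
end

section
/- Let (X,d) be a regular semimetric space. Then every convergent sequence in X has the Cauchy property: if (x_n) is a sequence in X and x ∈ X with d(x_n, x) → 0 as n → ∞, then for every ε > 0 there exists N such that d(x_n, x_m) < ε for all n, m ≥ N. -/
open Filter Topology

theorem regular_conv_cauchy {X : Type*} [Nonempty X]
    (d : X → X → NNReal) (hd : IsSemimetric d) (hreg : IsRegularSemimetric d)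
    (x : ℕ → X) (a : X) (ha : SConv d x a) :
    SCauchy d x := by
  obtain ⟨hsym, hzero⟩ := hd
  intro ε hε
  -- basicTriangle d 0 0 = 0
  have hB0 : basicTriangle d 0 0 = 0 := by
    apply le_antisymm _ zero_le
    apply sSup_le
    rintro w ⟨u, v, p, rfl, hu, hv⟩
    have hpu : p = u := (hzero p u).mp (le_antisymm (by exact_mod_cast hu) zero_le)
    have hpv : p = v := (hzero p v).mp (le_antisymm (by exact_mod_cast hv) zero_le)
    subst hpu; subst hpv
    simp [(hzero p p).mpr rfl]
  have htd : Tendsto (fun p : ENNReal × ENNReal => basicTriangle d p.1 p.2)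
      (𝓝 (0, 0)) (𝓝 0) := by
    have := hreg
    unfold IsRegularSemimetric ContinuousAt at this
    simpa [hB0] using this
  have hev : ∀ᶠ p : ENNReal × ENNReal in 𝓝 (0, 0),
      basicTriangle d p.1 p.2 < (ε : ENNReal) := by
    have hIio : ∀ᶠ w in 𝓝 (0 : ENNReal), w < (ε : ENNReal) :=
      Iio_mem_nhds (by exact_mod_cast hε)
    exact htd.eventually hIio
  rw [nhds_prod_eq] at hev
  obtain ⟨⟨δ₁, δ₂⟩, hδ₁, hP⟩ :=
    ((ENNReal.nhds_zero_basis.prod ENNReal.nhds_zero_basis).eventually_iff).mp hev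
  -- get N
  have haE : Tendsto (fun n => ((d (x n) a : ENNReal))) atTop (𝓝 0) := by
    have := (ENNReal.tendsto_coe.mpr ha)
    simpa using this
  have hδ : (0:ENNReal) < min δ₁ δ₂ := lt_min hδ₁.1 hδ₁.2
  have hN : ∀ᶠ n in atTop, ((d (x n) a : ENNReal)) < min δ₁ δ₂ :=
    haE (Iio_mem_nhds hδ)
  obtain ⟨N, hNlt⟩ := hN.exists_forall_of_atTop
  refine ⟨N, fun n m hn hm => ?_⟩
  have hnδ := hNlt n hn
  have hmδ := hNlt m hm
  have hle : (d (x n) (x m) : ENNReal) ≤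
      basicTriangle d (d (x n) a) (d (x m) a) := by
    apply le_sSup
    exact ⟨x n, x m, a, rfl, by rw [hsym a (x n)], by rw [hsym a (x m)]⟩
  have hlt : basicTriangle d (d (x n) a) (d (x m) a) < (ε : ENNReal) := by
    exact hP (Set.mk_mem_prod (lt_of_lt_of_le hnδ (min_le_left _ _))
      (lt_of_lt_of_le hmδ (min_le_right _ _)))
  exact_mod_cast lt_of_le_of_lt hle hlt
end

section
/- A semimetric space (X,d) is regular if and only if lim_{r → 0⁺} sup_{p ∈ X} diam B(p,r) = 0, where B(p,r) = { q ∈ X : d(p,q) < r } and diam B(p,r) = sup{ d(x,y) : x, y ∈ B(p,r) }. -/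
open Filter Topology

theorem regular_iff_diam_balls {X : Type*} [Nonempty X]
    (d : X → X → NNReal) (hd : IsSemimetric d) :
    IsRegularSemimetric d ↔
      Tendsto (fun r : NNReal =>
          ⨆ p : X, sSup {w : ENNReal | ∃ x y : X, w = (d x y : ENNReal) ∧ d p x < r ∧ d p y < r})
        (𝓝[>] (0 : NNReal)) (𝓝 0) := by

  classical
  set S : NNReal → ENNReal := fun r =>
    ⨆ p : X, sSup {w : ENNReal | ∃ x y : X, w = (d x y : ENNReal) ∧ d p x < r ∧ d p y < r}
    with hSdef
  have hzero : basicTriangle d 0 0 = 0 := by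
    refine le_antisymm (sSup_le ?_) (zero_le)
    rintro w ⟨x, y, p, rfl, hx, hy⟩
    have hx' : p = x := (hd.2 p x).1 (by exact_mod_cast le_antisymm (by exact_mod_cast hx) (zero_le))
    have hy' : p = y := (hd.2 p y).1 (by exact_mod_cast le_antisymm (by exact_mod_cast hy) (zero_le))
    subst hx'; subst hy'
    simp [(hd.2 p p).2 rfl]
  have hSle : ∀ r : NNReal, S r ≤ basicTriangle d r r := by
    intro r
    refine iSup_le fun p => sSup_le ?_
    rintro w ⟨x, y, hw, hx, hy⟩
    exact le_sSup ⟨x, y, p, hw, by exact_mod_cast hx.le, by exact_mod_cast hy.le⟩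
  have hPhile : ∀ (u v : ENNReal) (r : NNReal), u < r → v < r → basicTriangle d u v ≤ S r := by
    intro u v r hu hv
    simp only [hSdef]
    refine sSup_le ?_
    rintro w ⟨x, y, p, hw, hx, hy⟩
    have hwmem : w ∈ {w : ENNReal | ∃ x y : X, w = (d x y : ENNReal) ∧ d p x < r ∧ d p y < r} :=
      ⟨x, y, hw, by exact_mod_cast lt_of_le_of_lt hx hu, by exact_mod_cast lt_of_le_of_lt hy hv⟩
    exact le_trans (le_sSup hwmem)
      (le_iSup (fun p => sSup {w : ENNReal | ∃ x y : X, w = (d x y : ENNReal) ∧ d p x < r ∧ d p y < r}) p)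
  constructor
  · intro h
    have h : Tendsto (fun p : ENNReal × ENNReal => basicTriangle d p.1 p.2)
        (𝓝 ((0 : ENNReal), (0 : ENNReal))) (𝓝 0) := by
      have h' := h
      unfold IsRegularSemimetric ContinuousAt at h'
      simpa [hzero] using h'
    have hc : Tendsto (fun r : NNReal => ((r : ENNReal), (r : ENNReal))) (𝓝[>] (0 : NNReal))
        (𝓝 ((0 : ENNReal), (0 : ENNReal))) := by
      have hc0 : Tendsto (fun r : NNReal => (r : ENNReal)) (𝓝[>] (0 : NNReal)) (𝓝 0) := by
        have := (ENNReal.continuous_coe.tendsto (0 : NNReal)).mono_left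
          (nhdsWithin_le_nhds (s := Set.Ioi (0 : NNReal)))
        simpa using this
      exact hc0.prodMk_nhds hc0
    have hdiag : Tendsto (fun r : NNReal => basicTriangle d r r) (𝓝[>] (0 : NNReal)) (𝓝 0) :=
      h.comp hc
    exact tendsto_of_tendsto_of_tendsto_of_le_of_le tendsto_const_nhds hdiag
      (fun r => zero_le) hSle
  · intro h
    unfold IsRegularSemimetric ContinuousAt
    simp only [hzero]
    rw [ENNReal.tendsto_nhds_zero]
    intro ε hε
    obtain ⟨r, hrS, hr⟩ := ((ENNReal.tendsto_nhds_zero.mp h ε hε).and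
      (eventually_mem_nhdsWithin)).exists
    have hr0 : (0 : ENNReal) < r := by exact_mod_cast hr
    have h1 : ∀ᶠ u in 𝓝 (0 : ENNReal), u < (r : ENNReal) := gt_mem_nhds hr0
    have hmem : ∀ᶠ q : ENNReal × ENNReal in 𝓝 (0, 0), q.1 < r ∧ q.2 < r := by
      rw [nhds_prod_eq]
      filter_upwards [Filter.prod_mem_prod h1 h1] with q hq
      exact ⟨hq.1, hq.2⟩
    filter_upwards [hmem] with q hq
    exact (hPhile q.1 q.2 r hq.1 hq.2).trans hrS
end

section
/- Let d₁ and d₂ be semimetrics on a nonempty set X. Then the basic triangle functions satisfy Φ_{d₁}(u,v) ≤ L_{d₁,d₂}( Φ_{d₂}( L_{d₂,d₁}(u), L_{d₂,d₁}(v) ) ) for all u, v in the extended nonnegative reals. -/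
open Filter Topology

theorem basicTriangle_le_Lmod {X : Type*} [Nonempty X]
    (d₁ d₂ : X → X → NNReal) (h₁ : IsSemimetric d₁) (h₂ : IsSemimetric d₂) :
    ∀ u v : ENNReal,
      basicTriangle d₁ u v ≤ Lmod d₁ d₂ (basicTriangle d₂ (Lmod d₂ d₁ u) (Lmod d₂ d₁ v)) := by
  intro u v
  apply sSup_le
  rintro w ⟨x, y, p, rfl, hpx, hpy⟩
  have h2x : (d₂ p x : ENNReal) ≤ Lmod d₂ d₁ u := le_sSup ⟨p, x, rfl, hpx⟩
  have h2y : (d₂ p y : ENNReal) ≤ Lmod d₂ d₁ v := le_sSup ⟨p, y, rfl, hpy⟩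
  have hxy : (d₂ x y : ENNReal) ≤ basicTriangle d₂ (Lmod d₂ d₁ u) (Lmod d₂ d₁ v) :=
    le_sSup ⟨x, y, p, rfl, h2x, h2y⟩
  exact le_sSup ⟨x, y, rfl, hxy⟩
end

section
/- Let d₁ and d₂ be equivalent semimetrics on a nonempty set X. Then (X,d₁) is regular (its basic triangle function Φ_{d₁} is continuous at the origin) if and only if (X,d₂) is regular. -/
open Filter Topology

section MyAux

variable {X : Type*}

lemma my_basicTriangle_mono (d : X → X → NNReal) :
    Monotone (fun p : ENNReal × ENNReal => basicTriangle d p.1 p.2) := by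
  intro p q hpq
  apply sSup_le_sSup
  rintro w ⟨x, y, r, rfl, hx, hy⟩
  exact ⟨x, y, r, rfl, hx.trans hpq.1, hy.trans hpq.2⟩

lemma my_basicTriangle_zero (d : X → X → NNReal) (h : IsSemimetric d) :
    basicTriangle d 0 0 = 0 := by
  refine le_antisymm (sSup_le ?_) zero_le
  rintro w ⟨x, y, p, rfl, hx, hy⟩
  have hx' : d p x = 0 := by exact_mod_cast le_antisymm hx zero_le
  have hy' : d p y = 0 := by exact_mod_cast le_antisymm hy zero_le
  have : x = y := ((h.2 p x).1 hx').symm.trans ((h.2 p y).1 hy')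
  subst this
  simp [(h.2 x x).2 rfl]

lemma my_Lmod_zero (d₁ d₂ : X → X → NNReal) (h₁ : IsSemimetric d₁) (h₂ : IsSemimetric d₂) :
    Lmod d₁ d₂ 0 = 0 := by
  refine le_antisymm (sSup_le ?_) zero_le
  rintro w ⟨x, y, rfl, hxy⟩
  have : d₂ x y = 0 := by exact_mod_cast le_antisymm hxy zero_le
  have hxy' : x = y := (h₂.2 x y).1 this
  subst hxy'
  simp [(h₁.2 x x).2 rfl]

lemma my_regular_iff (d : X → X → NNReal) (h : IsSemimetric d) :
    IsRegularSemimetric d ↔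
      ∀ ε : ENNReal, 0 < ε → ∃ δ : ENNReal, 0 < δ ∧ basicTriangle d δ δ < ε := by
  have h0 : basicTriangle d 0 0 = 0 := my_basicTriangle_zero d h
  constructor
  · intro hreg ε hε
    have hmem : (fun p : ENNReal × ENNReal => basicTriangle d p.1 p.2) ⁻¹' (Set.Iio ε)
        ∈ 𝓝 ((0 : ENNReal), (0 : ENNReal)) := by
      apply hreg
      simp only [h0]
      exact Iio_mem_nhds hε
    rw [nhds_prod_eq] at hmem
    obtain ⟨δ, hδ, hsub⟩ :=
      (ENNReal.nhds_zero_basis.prod_self).mem_iff.mp hmem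
    obtain ⟨δ', hδ'0, hδ'⟩ := exists_between hδ
    exact ⟨δ', hδ'0, hsub (show ((δ', δ') : ENNReal × ENNReal) ∈ _ from ⟨hδ', hδ'⟩)⟩
  · intro hc
    rw [IsRegularSemimetric, ContinuousAt]
    rw [show basicTriangle d ((0, 0) : ENNReal × ENNReal).1 ((0, 0) : ENNReal × ENNReal).2 = 0
      from h0, ENNReal.nhds_zero_basis.tendsto_right_iff]
    intro ε hε
    obtain ⟨δ, hδ, hlt⟩ := hc ε hε
    rw [nhds_prod_eq]
    filter_upwards [Filter.prod_mem_prod (Iio_mem_nhds hδ) (Iio_mem_nhds hδ)] with p hp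
    exact lt_of_le_of_lt
      (my_basicTriangle_mono d (show p ≤ (δ, δ) from ⟨le_of_lt hp.1, le_of_lt hp.2⟩)) hlt

lemma my_eventually_small {L : ENNReal → ENNReal}
    (hL : Tendsto L (𝓝[>] (0 : ENNReal)) (𝓝 0)) (h0 : L 0 = 0)
    {ε : ENNReal} (hε : 0 < ε) :
    ∃ δ : ENNReal, 0 < δ ∧ ∀ t ≤ δ, L t < ε := by
  have hmem : L ⁻¹' (Set.Iio ε) ∈ 𝓝[>] (0 : ENNReal) := hL (Iio_mem_nhds hε)
  rw [mem_nhdsWithin] at hmem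
  obtain ⟨U, hUo, hU0, hsub⟩ := hmem
  obtain ⟨δ, hδpos, hIio⟩ := ENNReal.nhds_zero_basis.mem_iff.mp (hUo.mem_nhds hU0)
  obtain ⟨δ', h1, h2⟩ := exists_between hδpos
  refine ⟨δ', h1, fun t ht => ?_⟩
  rcases eq_or_lt_of_le (zero_le : 0 ≤ t) with rfl | hpos
  · simpa [h0] using hε
  · exact hsub ⟨hIio (lt_of_le_of_lt ht h2), hpos⟩

lemma my_key (d₁ d₂ : X → X → NNReal) (u : ENNReal) :
    basicTriangle d₁ u u ≤
      Lmod d₁ d₂ (basicTriangle d₂ (Lmod d₂ d₁ u) (Lmod d₂ d₁ u)) := by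
  apply sSup_le
  rintro w ⟨x, y, p, rfl, hpx, hpy⟩
  apply le_sSup
  exact ⟨x, y, rfl,
    le_sSup ⟨x, y, p, rfl, le_sSup ⟨p, x, rfl, hpx⟩, le_sSup ⟨p, y, rfl, hpy⟩⟩⟩

lemma my_reg_of (d₁ d₂ : X → X → NNReal) (h₁ : IsSemimetric d₁) (h₂ : IsSemimetric d₂)
    (heq : SEquiv d₁ d₂) (hr : IsRegularSemimetric d₂) : IsRegularSemimetric d₁ := by
  rw [my_regular_iff d₁ h₁]
  intro ε hε
  obtain ⟨δ1, hδ1, hL12⟩ := my_eventually_small heq.1 (my_Lmod_zero d₁ d₂ h₁ h₂) hε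
  obtain ⟨δ2, hδ2, hΦ⟩ := (my_regular_iff d₂ h₂).mp hr δ1 hδ1
  obtain ⟨δ, hδ, hL21⟩ := my_eventually_small heq.2 (my_Lmod_zero d₂ d₁ h₂ h₁) hδ2
  refine ⟨δ, hδ, lt_of_le_of_lt (my_key d₁ d₂ δ) ?_⟩
  apply hL12
  calc basicTriangle d₂ (Lmod d₂ d₁ δ) (Lmod d₂ d₁ δ)
      ≤ basicTriangle d₂ δ2 δ2 :=
        my_basicTriangle_mono d₂ (show ((Lmod d₂ d₁ δ, Lmod d₂ d₁ δ) : ENNReal × ENNReal) ≤ (δ2, δ2)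
          from ⟨le_of_lt (hL21 δ le_rfl), le_of_lt (hL21 δ le_rfl)⟩)
    _ ≤ δ1 := le_of_lt hΦ

end MyAux

theorem equiv_regular_iff {X : Type*} [Nonempty X]
    (d₁ d₂ : X → X → NNReal) (h₁ : IsSemimetric d₁) (h₂ : IsSemimetric d₂)
    (heq : SEquiv d₁ d₂) :
    IsRegularSemimetric d₁ ↔ IsRegularSemimetric d₂ :=
  ⟨fun h => my_reg_of d₂ d₁ h₂ h₁ ⟨heq.2, heq.1⟩ h, fun h => my_reg_of d₁ d₂ h₁ h₂ heq h⟩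
end

section
/- Let (X,d) be a complete regular semimetric space and φ : ℝ₊ → ℝ₊ a comparison function. Then every φ-contraction T : X → X has a unique fixed point. Moreover, for any starting point p ∈ X, the sequence of iterates (Tⁿp) converges to this fixed point. -/
open Filter Topology

section MatkowskiAux

variable {X : Type*} [Nonempty X]

/-- From regularity: `δ`-balls have diameter at most `ε`. -/
lemma matk_ball (d : X → X → NNReal) (hd : IsSemimetric d)
    (hreg : IsRegularSemimetric d) (ε : NNReal) (hε : 0 < ε) :
    ∃ δ : NNReal, 0 < δ ∧ δ ≤ ε ∧ ∀ q x y : X, d q x ≤ δ → d q y ≤ δ → d x y ≤ ε := by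
  have h00 : basicTriangle d 0 0 = 0 := by
    apply le_antisymm _ zero_le
    apply sSup_le
    rintro w ⟨x, y, q, rfl, hx, hy⟩
    have hx0 : q = x := (hd.2 q x).mp (by exact_mod_cast le_antisymm hx zero_le)
    have hy0 : q = y := (hd.2 q y).mp (by exact_mod_cast le_antisymm hy zero_le)
    subst hx0; subst hy0
    simp [(hd.2 q q).mpr rfl]
  have ht : Filter.Tendsto (fun q : ENNReal × ENNReal => basicTriangle d q.1 q.2)
      (nhds ((0 : ENNReal), (0 : ENNReal))) (nhds 0) := by
    have h := hreg
    unfold IsRegularSemimetric ContinuousAt at h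
    simpa [h00] using h
  have hdiag : Filter.Tendsto (fun u : ENNReal => basicTriangle d u u) (nhds 0) (nhds 0) :=
    ht.comp (Filter.Tendsto.prodMk_nhds tendsto_id tendsto_id)
  have hev : ∀ᶠ u in nhds (0 : ENNReal), basicTriangle d u u < (ε : ENNReal) :=
    hdiag.eventually_lt_const (by exact_mod_cast hε)
  obtain ⟨b, hb0, hb⟩ := ENNReal.nhds_zero_basis.eventually_iff.mp hev
  obtain ⟨r, hr0, hrb⟩ := ENNReal.lt_iff_exists_nnreal_btwn.mp hb0
  refine ⟨min r ε, lt_min (by exact_mod_cast hr0) hε, min_le_right _ _, ?_⟩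
  intro q x y hx hy
  have hmem : (d x y : ENNReal) ≤ basicTriangle d (min r ε) (min r ε) :=
    le_sSup ⟨x, y, q, rfl, by exact_mod_cast hx, by exact_mod_cast hy⟩
  have hlt : basicTriangle d ((min r ε : NNReal) : ENNReal) ((min r ε : NNReal) : ENNReal)
      < (ε : ENNReal) := by
    apply hb
    have h1 : ((min r ε : NNReal) : ENNReal) ≤ (r : ENNReal) := by
      exact_mod_cast min_le_left r ε
    exact lt_of_le_of_lt h1 hrb
  exact_mod_cast (hmem.trans_lt hlt).le

lemma matk_phi_lt (φ : NNReal → NNReal) (hφ : IsComparison φ) {t : NNReal} (ht : 0 < t) :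
    φ t < t := by
  by_contra h
  push_neg at h
  have key : ∀ n, t ≤ φ^[n] t := by
    intro n
    induction n with
    | zero => simp
    | succ n ih =>
      rw [Function.iterate_succ_apply']
      exact h.trans (hφ.1 ih)
  have h0 : t ≤ 0 := ge_of_tendsto (hφ.2 t) (Filter.Eventually.of_forall key)
  exact (not_le.mpr ht) h0

lemma matk_phi_le (φ : NNReal → NNReal) (hφ : IsComparison φ) (t : NNReal) : φ t ≤ t := by
  rcases eq_zero_or_pos t with h | h
  · subst h
    by_contra hc
    push_neg at hc
    have h0 : 0 < φ 0 := lt_of_le_of_lt zero_le hc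
    have h1 : φ (φ 0) < φ 0 := matk_phi_lt φ hφ h0
    have h2 : φ 0 ≤ φ (φ 0) := hφ.1 zero_le
    exact (not_le.mpr h1) h2
  · exact (matk_phi_lt φ hφ h).le

lemma matk_phi_iter_le (φ : NNReal → NNReal) (hφ : IsComparison φ) :
    ∀ (n : ℕ) (t : NNReal), φ^[n] t ≤ t := by
  intro n
  induction n with
  | zero => intro t; simp
  | succ n ih =>
    intro t
    rw [Function.iterate_succ_apply]
    exact (ih (φ t)).trans (matk_phi_le φ hφ t)

lemma matk_contr_iter (d : X → X → NNReal) (φ : NNReal → NNReal) (hφ : IsComparison φ)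
    (T : X → X) (hT : IsPhiContraction d φ T) :
    ∀ (n : ℕ) (x y : X), d (T^[n] x) (T^[n] y) ≤ φ^[n] (d x y) := by
  intro n
  induction n with
  | zero => intro x y; simp
  | succ n ih =>
    intro x y
    rw [Function.iterate_succ_apply, Function.iterate_succ_apply,
      Function.iterate_succ_apply]
    exact (ih (T x) (T y)).trans ((hφ.1.iterate n) (hT x y))

lemma matk_orbit (d : X → X → NNReal) (hd : IsSemimetric d)
    (hreg : IsRegularSemimetric d) (hcomp : SComplete d)
    (φ : NNReal → NNReal) (hφ : IsComparison φ)
    (T : X → X) (hT : IsPhiContraction d φ T) (p : X) :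
    ∃ a, SConv d (fun n => T^[n] p) a ∧ T a = a := by
  have row : ∀ ε : NNReal, 0 < ε → ∃ N, ∀ m, N ≤ m → d (T^[N] p) (T^[m] p) ≤ ε := by
    intro ε hε
    obtain ⟨δ, hδ0, hδε, hball⟩ := matk_ball d hd hreg ε hε
    have hevj : ∀ᶠ n in Filter.atTop, φ^[n] ε ≤ δ := by
      filter_upwards [(hφ.2 ε).eventually_lt_const hδ0] with n h using h.le
    obtain ⟨j, hjδ, hj1⟩ := (hevj.and (Filter.eventually_ge_atTop 1)).exists
    have hevN : ∀ᶠ n in Filter.atTop,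
        ∀ r ∈ Finset.range (j + 1), φ^[n] (d p (T^[r] p)) ≤ δ := by
      rw [eventually_all_finset]
      intro r _
      filter_upwards [(hφ.2 (d p (T^[r] p))).eventually_lt_const hδ0] with n h using h.le
    obtain ⟨N, hN⟩ := hevN.exists
    have short : ∀ r, r ≤ j → d (T^[N] p) (T^[N + r] p) ≤ δ := by
      intro r hr
      rw [Function.iterate_add_apply]
      exact (matk_contr_iter d φ hφ T hT N p (T^[r] p)).trans
        (hN r (Finset.mem_range.mpr (by omega)))
    refine ⟨N, ?_⟩
    intro m
    induction m using Nat.strong_induction_on with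
    | _ m IH =>
      intro hm
      rcases le_or_gt m (N + j) with hc | hc
      · have e : N + (m - N) = m := by omega
        have hs := short (m - N) (by omega)
        rw [e] at hs
        exact hs.trans hδε
      · have h1 : d (T^[N] p) (T^[m - j] p) ≤ ε := IH (m - j) (by omega) (by omega)
        have h2 : d (T^[N + j] p) (T^[m] p) ≤ δ := by
          have e1 : T^[N + j] p = T^[j] (T^[N] p) := by
            rw [add_comm, Function.iterate_add_apply]
          have e2 : T^[m] p = T^[j] (T^[m - j] p) := by
            conv_lhs => rw [show m = j + (m - j) from by omega]
            rw [Function.iterate_add_apply]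
          rw [e1, e2]
          exact (matk_contr_iter d φ hφ T hT j _ _).trans (((hφ.1.iterate j) h1).trans hjδ)
        have h3 : d (T^[N + j] p) (T^[N] p) ≤ δ := by
          rw [hd.1]
          exact short j le_rfl
        exact hball (T^[N + j] p) _ _ h3 h2
  have hcau : SCauchy d (fun n => T^[n] p) := by
    intro ε hε
    have hε2 : 0 < ε / 2 := half_pos hε
    obtain ⟨N, hN⟩ := row (ε / 2) hε2
    have aux : ∀ n m, N ≤ n → n ≤ m → d (T^[n] p) (T^[m] p) ≤ ε / 2 := by
      intro n m hn hnm
      have e1 : T^[n] p = T^[n - N] (T^[N] p) := by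
        conv_lhs => rw [show n = (n - N) + N from by omega]
        rw [Function.iterate_add_apply]
      have e2 : T^[m] p = T^[n - N] (T^[m - n + N] p) := by
        conv_lhs => rw [show m = (n - N) + (m - n + N) from by omega]
        rw [Function.iterate_add_apply]
      rw [e1, e2]
      refine (matk_contr_iter d φ hφ T hT (n - N) _ _).trans ?_
      calc φ^[n - N] (d (T^[N] p) (T^[m - n + N] p))
          ≤ φ^[n - N] (ε / 2) := (hφ.1.iterate _) (hN _ (by omega))
        _ ≤ ε / 2 := matk_phi_iter_le φ hφ _ _
    refine ⟨N, ?_⟩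
    intro n m hn hm
    have hhalf : ε / 2 < ε := NNReal.half_lt_self hε.ne'
    rcases le_total n m with h | h
    · exact lt_of_le_of_lt (aux n m hn h) hhalf
    · refine lt_of_le_of_lt ?_ hhalf
      simp only []
      rw [hd.1]
      exact aux m n hm h
  obtain ⟨a, ha⟩ := hcomp _ hcau
  refine ⟨a, ha, ?_⟩
  have ha' : Filter.Tendsto (fun n => d (T^[n] p) a) Filter.atTop (nhds 0) := ha
  have key : ∀ ε : NNReal, 0 < ε → d (T a) a ≤ ε := by
    intro ε hε
    obtain ⟨δ, hδ0, hδε, hball⟩ := matk_ball d hd hreg ε hε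
    have hev : ∀ᶠ n in Filter.atTop, d (T^[n] p) a < δ := ha'.eventually_lt_const hδ0
    obtain ⟨M, hM⟩ := Filter.eventually_atTop.mp hev
    have leg1 : d (T^[M + 1] p) (T a) ≤ δ := by
      rw [Function.iterate_succ_apply']
      exact (hT _ _).trans ((matk_phi_le φ hφ _).trans (hM M le_rfl).le)
    have leg2 : d (T^[M + 1] p) a ≤ δ := (hM (M + 1) (by omega)).le
    exact hball _ _ _ leg1 leg2
  have h0 : d (T a) a = 0 := by
    by_contra h
    have h2 := key (d (T a) a / 2) (half_pos (zero_lt_iff.mpr h))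
    exact (not_le.mpr (NNReal.half_lt_self h)) h2
  exact (hd.2 _ _).mp h0

end MatkowskiAux

theorem matkowski_semimetric {X : Type*} [Nonempty X]
    (d : X → X → NNReal) (hd : IsSemimetric d)
    (hreg : IsRegularSemimetric d) (hcomp : SComplete d)
    (φ : NNReal → NNReal) (hφ : IsComparison φ)
    (T : X → X) (hT : IsPhiContraction d φ T) :
    ∃ x₀ : X, T x₀ = x₀ ∧ (∀ y, T y = y → y = x₀) ∧
      ∀ p : X, SConv d (fun n => T^[n] p) x₀ := by
  obtain ⟨x₀, hconv₀, hfix₀⟩ := matk_orbit d hd hreg hcomp φ hφ T hT (Classical.arbitrary X)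
  have uniq : ∀ y, T y = y → y = x₀ := by
    intro y hy
    have key : ∀ n, d y x₀ ≤ φ^[n] (d y x₀) := by
      intro n
      have e1 : T^[n] y = y := Function.iterate_fixed hy n
      have e2 : T^[n] x₀ = x₀ := Function.iterate_fixed hfix₀ n
      have h := matk_contr_iter d φ hφ T hT n y x₀
      rwa [e1, e2] at h
    have h0 : d y x₀ ≤ 0 := ge_of_tendsto (hφ.2 (d y x₀)) (Filter.Eventually.of_forall key)
    exact (hd.2 y x₀).mp (le_antisymm h0 zero_le)
  refine ⟨x₀, hfix₀, uniq, ?_⟩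
  intro p
  obtain ⟨a, hc, hf⟩ := matk_orbit d hd hreg hcomp φ hφ T hT p
  rwa [uniq a hf] at hc
end

section
/- Let (X,d) be a semimetric space whose semimetric is self-continuous, i.e., d(x_n,y_n) → d(x,y) whenever d(x_n,x) → 0 and d(y_n,y) → 0. Let φ : ℝ₊ → ℝ₊ be a comparison function and let (T_n) be a sequence of φ-contractions of X converging pointwise to a map T₀ : X → X. Then T₀ is a φ-contraction. -/
open Filter Topology

theorem pointwise_limit_phiContraction {X : Type*} [Nonempty X]
    (d : X → X → NNReal) (hd : IsSemimetric d)
    (hself : ∀ (x y : ℕ → X) (a b : X), SConv d x a → SConv d y b →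
      Tendsto (fun n => d (x n) (y n)) atTop (𝓝 (d a b)))
    (φ : NNReal → NNReal) (hφ : IsComparison φ)
    (T : ℕ → X → X) (hT : ∀ n, IsPhiContraction d φ (T n))
    (T₀ : X → X)
    (hconv : ∀ x : X, Tendsto (fun n => d (T n x) (T₀ x)) atTop (𝓝 0)) :
    IsPhiContraction d φ T₀ := by
  intro x y
  have h := hself (fun n => T n x) (fun n => T n y) (T₀ x) (T₀ y) (hconv x) (hconv y)
  exact le_of_tendsto h (Filter.Eventually.of_forall fun n => hT n x y)
end

section
/- Let c ≥ 1 and let (X,d) be a complete c-relaxed metric space, i.e., a complete semimetric space satisfying the c-relaxed triangle inequality d(x,y) ≤ c(d(x,z) + d(z,y)) for all x,y,z ∈ X. If φ : ℝ₊ → ℝ₊ is a comparison function, then every φ-contraction T : X → X has a unique fixed point. The same conclusion holds if instead (X,d) is a complete c-inframetric space, i.e., d(x,y) ≤ c·max{d(x,z), d(z,y)} for all x,y,z ∈ X. -/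
open Filter Topology

theorem aux_relaxed {X : Type*} [Nonempty X]
    (c : NNReal) (hc : 1 ≤ c)
    (d : X → X → NNReal) (hd : IsSemimetric d) (hcomp : SComplete d)
    (φ : NNReal → NNReal) (hφ : IsComparison φ)
    (T : X → X) (hT : IsPhiContraction d φ T)
    (htri : ∀ x y z : X, d x y ≤ c * (d x z + d z y)) : ∃! x₀ : X, T x₀ = x₀ := by
  -- comparison function facts
  have hA : ∀ t, t ≤ φ t → t = 0 := by
    intro t ht
    have hmono : Monotone fun n => φ^[n] t := by
      apply monotone_nat_of_le_succ
      intro n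
      rw [Function.iterate_succ_apply]
      exact hφ.1.iterate n ht
    have : t ≤ 0 := ge_of_tendsto' (hφ.2 t) (fun n => hmono (Nat.zero_le n))
    exact le_antisymm this (zero_le)
  have hB : ∀ t, φ t ≤ t := by
    intro t
    by_contra h
    push_neg at h
    have ht0 : t = 0 := hA t h.le
    have h0 : φ 0 = 0 := hA (φ 0) (hφ.1 (zero_le))
    rw [ht0, h0] at h
    exact lt_irrefl _ h
  obtain ⟨x₀⟩ := ‹Nonempty X›
  set x : ℕ → X := fun n => T^[n] x₀ with hx
  have hTp : ∀ p (a b : X), d (T^[p] a) (T^[p] b) ≤ φ^[p] (d a b) := by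
    intro p
    induction p with
    | zero => intro a b; simp
    | succ p ih =>
      intro a b
      simp only [Function.iterate_succ_apply']
      exact le_trans (hT _ _) (hφ.1 (ih a b))
  have hgap : ∀ p, Tendsto (fun n => d (x n) (x (n + p))) atTop (𝓝 0) := by
    intro p
    induction p with
    | zero =>
      have : (fun n => d (x n) (x (n + 0))) = fun _ => 0 :=
        funext fun n => (hd.2 _ _).2 (by rw [Nat.add_zero])
      rw [this]; exact tendsto_const_nhds
    | succ p ih =>
      have hstep : Tendsto (fun n => d (x n) (x (n + 1))) atTop (𝓝 0) := by
        apply tendsto_of_tendsto_of_tendsto_of_le_of_le tendsto_const_nhds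
          (hφ.2 (d x₀ (T x₀))) (fun n => zero_le)
        intro n
        show d (x n) (x (n + 1)) ≤ φ^[n] (d x₀ (T x₀))
        have e : x (n + 1) = T^[n] (T x₀) := Function.iterate_succ_apply T n x₀
        rw [e]
        exact hTp n x₀ (T x₀)
      have h2 : Tendsto (fun n => d (x (n + 1)) (x (n + 1 + p))) atTop (𝓝 0) :=
        ih.comp (tendsto_add_atTop_nat 1)
      have h3 : Tendsto (fun n => c * (d (x n) (x (n + 1)) + d (x (n + 1)) (x (n + 1 + p))))
          atTop (𝓝 0) := by
        have := (hstep.add h2).const_mul c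
        simpa using this
      apply tendsto_of_tendsto_of_tendsto_of_le_of_le tendsto_const_nhds h3
        (fun n => zero_le)
      intro n
      show d (x n) (x (n + (p + 1))) ≤ _
      have e : n + (p + 1) = n + 1 + p := by omega
      rw [e]
      exact htri _ _ _
  -- key uniform bound
  have key : ∀ η : NNReal, 0 < η → ∃ N, ∀ n, N ≤ n → ∀ k, d (x n) (x (n + k)) ≤ η := by
    intro η hη
    have hη2 : 0 < η / 2 := by positivity
    obtain ⟨p₀, hp₀⟩ := (((hφ.2 η).const_mul c).mono_right (by simp)).eventually
      (gt_mem_nhds hη2) |>.exists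
    set p := p₀ + 1 with hp_def
    have hp : c * φ^[p] η ≤ η / 2 := by
      refine le_trans (mul_le_mul_right ?_ c) hp₀.le
      rw [Function.iterate_succ_apply']
      exact hB _
    have Hall : ∀ᶠ n in atTop, ∀ j ∈ Set.Iic p, c * d (x n) (x (n + j)) < η / 2 := by
      rw [eventually_all_finite (Set.finite_Iic p)]
      intro j _
      exact (((hgap j).const_mul c).mono_right (by simp)).eventually (gt_mem_nhds hη2)
    obtain ⟨N, hN⟩ := eventually_atTop.1 Hall
    refine ⟨N, fun n hn k => ?_⟩
    induction k using Nat.strong_induction_on with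
    | _ k IH =>
      by_cases hk : k ≤ p
      · calc d (x n) (x (n + k)) ≤ c * d (x n) (x (n + k)) :=
              le_mul_of_one_le_left (zero_le) hc
          _ ≤ η / 2 := (hN n hn k (Set.mem_Iic.2 hk)).le
          _ ≤ η := half_le_self (zero_le)
      · push_neg at hk
        set m := k - p with hm_def
        have hm : k = p + m := by omega
        have hmk : m < k := by omega
        have e1 : x (n + p) = T^[p] (x n) := by
          show T^[n + p] x₀ = T^[p] (T^[n] x₀)
          rw [← Function.iterate_add_apply]
          congr 1
          omega
        have e2 : x (n + k) = T^[p] (x (n + m)) := by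
          show T^[n + k] x₀ = T^[p] (T^[n + m] x₀)
          rw [← Function.iterate_add_apply]
          congr 1
          omega
        have hbound : d (x (n + p)) (x (n + k)) ≤ φ^[p] η := by
          rw [e1, e2]
          exact le_trans (hTp p _ _) (hφ.1.iterate p (IH m hmk))
        calc d (x n) (x (n + k))
            ≤ c * (d (x n) (x (n + p)) + d (x (n + p)) (x (n + k))) := htri _ _ _
          _ = c * d (x n) (x (n + p)) + c * d (x (n + p)) (x (n + k)) := mul_add _ _ _
          _ ≤ η / 2 + c * φ^[p] η :=
              add_le_add (hN n hn p (Set.mem_Iic.2 le_rfl)).le (mul_le_mul_right hbound c)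
          _ ≤ η / 2 + η / 2 := add_le_add_right hp _
          _ = η := add_halves η
  have hcauchy : SCauchy d x := by
    intro ε hε
    have hε2 : 0 < ε / 2 := by positivity
    obtain ⟨N, hkey⟩ := key (ε / 2) hε2
    refine ⟨N, fun n m hn hm => ?_⟩
    have hhalf : ε / 2 < ε := NNReal.half_lt_self hε.ne'
    rcases le_total n m with h | h
    · have : m = n + (m - n) := by omega
      rw [this]
      exact lt_of_le_of_lt (hkey n hn (m - n)) hhalf
    · rw [hd.1]
      have : n = m + (n - m) := by omega
      rw [this]
      exact lt_of_le_of_lt (hkey m hm (n - m)) hhalf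
  obtain ⟨a, ha⟩ := hcomp x hcauchy
  have hfix : T a = a := by
    have h2 : Tendsto (fun n => d (x (n + 1)) a) atTop (𝓝 0) :=
      ha.comp (tendsto_add_atTop_nat 1)
    have hb : Tendsto (fun n => c * (d (x n) a + d (x (n + 1)) a)) atTop (𝓝 0) := by
      have := (ha.add h2).const_mul c
      simpa using this
    have hle : ∀ n, d (T a) a ≤ c * (d (x n) a + d (x (n + 1)) a) := by
      intro n
      calc d (T a) a ≤ c * (d (T a) (x (n + 1)) + d (x (n + 1)) a) := htri _ _ _
        _ ≤ c * (d (x n) a + d (x (n + 1)) a) := by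
            refine mul_le_mul_right (add_le_add_left ?_ _) c
            have e : x (n + 1) = T (x n) := Function.iterate_succ_apply' T n x₀
            rw [e]
            calc d (T a) (T (x n)) ≤ φ (d a (x n)) := hT _ _
              _ ≤ d a (x n) := hB _
              _ = d (x n) a := hd.1 _ _
    have : d (T a) a ≤ 0 := ge_of_tendsto' hb hle
    exact (hd.2 _ _).1 (le_antisymm this (zero_le))
  refine ⟨a, hfix, fun b hb => ?_⟩
  have : d b a ≤ φ (d b a) := by
    calc d b a = d (T b) (T a) := by rw [hb, hfix]
      _ ≤ φ (d b a) := hT _ _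
  exact (hd.2 _ _).1 (hA _ this)


theorem matkowski_relaxed_and_inframetric {X : Type*} [Nonempty X]
    (c : NNReal) (hc : 1 ≤ c)
    (d : X → X → NNReal) (hd : IsSemimetric d) (hcomp : SComplete d)
    (φ : NNReal → NNReal) (hφ : IsComparison φ)
    (T : X → X) (hT : IsPhiContraction d φ T) :
    ((∀ x y z : X, d x y ≤ c * (d x z + d z y)) → ∃! x₀ : X, T x₀ = x₀) ∧
      ((∀ x y z : X, d x y ≤ c * max (d x z) (d z y)) → ∃! x₀ : X, T x₀ = x₀) := by
  constructor
  · exact aux_relaxed c hc d hd hcomp φ hφ T hT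
  · intro h
    exact aux_relaxed c hc d hd hcomp φ hφ T hT fun x y z =>
      (h x y z).trans (mul_le_mul_right (max_le_add_of_nonneg (zero_le) (zero_le)) c)
end

section
/- Let c ≥ 1, let X be a nonempty set, and let d be a semimetric on X which is equivalent to a semimetric ρ on X, where (X,ρ) is a complete c-relaxed metric space (i.e., ρ satisfies ρ(x,y) ≤ c(ρ(x,z) + ρ(z,y)) for all x,y,z ∈ X and every ρ-Cauchy sequence ρ-converges). If φ : ℝ₊ → ℝ₊ is a comparison function, then every φ-contraction T : X → X with respect to d has a unique fixed point. -/
open Filter Topology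

section Aux

open Filter Topology

private lemma lmod_control {X : Type*} (d₁ d₂ : X → X → NNReal)
    (h : Tendsto (Lmod d₁ d₂) (𝓝[>] (0 : ENNReal)) (𝓝 0)) {ε : NNReal} (hε : 0 < ε) :
    ∃ δ : NNReal, 0 < δ ∧ ∀ x y, d₂ x y ≤ δ → d₁ x y < ε := by
  have hev : ∀ᶠ t in 𝓝[>] (0:ENNReal), Lmod d₁ d₂ t < (ε : ENNReal) :=
    h.eventually (gt_mem_nhds (by exact_mod_cast hε))
  have hmem : ∀ᶠ t in 𝓝[>] (0:ENNReal), t ∈ Set.Ioi (0:ENNReal) := eventually_mem_nhdsWithin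
  obtain ⟨t, hlt, ht0⟩ := (hev.and hmem).exists
  refine ⟨(min t 1).toNNReal, ?_, ?_⟩
  · apply ENNReal.toNNReal_pos
    · exact (lt_min ht0 zero_lt_one).ne'
    · exact (min_le_right t 1).trans_lt ENNReal.one_lt_top |>.ne
  · intro x y hxy
    have hc : ((min t 1).toNNReal : ENNReal) = min t 1 :=
      ENNReal.coe_toNNReal ((min_le_right t 1).trans_lt ENNReal.one_lt_top).ne
    have hd2 : (d₂ x y : ENNReal) ≤ t := by
      calc (d₂ x y : ENNReal) ≤ ((min t 1).toNNReal : ENNReal) := ENNReal.coe_le_coe.2 hxy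
        _ = min t 1 := hc
        _ ≤ t := min_le_left _ _
    have hmem' : (d₁ x y : ENNReal) ≤ Lmod d₁ d₂ t := le_sSup ⟨x, y, rfl, hd2⟩
    exact_mod_cast hmem'.trans_lt hlt

private lemma comp_fix {φ : NNReal → NNReal} (hφ : IsComparison φ) {s : NNReal}
    (hs : s ≤ φ s) : s = 0 := by
  have h : ∀ n, s ≤ φ^[n] s := by
    intro n
    induction n with
    | zero => simp
    | succ n ih =>
      rw [Function.iterate_succ_apply']
      exact hs.trans (hφ.1 ih)
  have := ge_of_tendsto' (hφ.2 s) h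
  exact le_antisymm this zero_le

private lemma comp_le {φ : NNReal → NNReal} (hφ : IsComparison φ) (t : NNReal) : φ t ≤ t := by
  by_contra h
  push_neg at h
  have h2 : φ t ≤ φ (φ t) := hφ.1 h.le
  have h3 := comp_fix hφ h2
  rw [h3] at h
  exact absurd h (by simp)

private lemma comp_iter_le {φ : NNReal → NNReal} (hφ : IsComparison φ) (n : ℕ) (t : NNReal) :
    φ^[n] t ≤ t := by
  induction n with
  | zero => simp
  | succ n ih =>
    rw [Function.iterate_succ_apply']
    exact (comp_le hφ _).trans ih

private lemma iter_contr {X : Type*} {d : X → X → NNReal} {φ : NNReal → NNReal} {T : X → X}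
    (hφm : Monotone φ) (hT : IsPhiContraction d φ T) (n : ℕ) (a b : X) :
    d (T^[n] a) (T^[n] b) ≤ φ^[n] (d a b) := by
  induction n generalizing a b with
  | zero => simp
  | succ n ih =>
    rw [Function.iterate_succ_apply, Function.iterate_succ_apply, Function.iterate_succ_apply]
    calc d (T^[n] (T a)) (T^[n] (T b)) ≤ φ^[n] (d (T a) (T b)) := ih _ _
      _ ≤ φ^[n] (φ (d a b)) := hφm.iterate n (hT a b)

end Aux


theorem matkowski_equiv_relaxed {X : Type*} [Nonempty X]
    (c : NNReal) (hc : 1 ≤ c)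
    (d ρ : X → X → NNReal) (hd : IsSemimetric d) (hρ : IsSemimetric ρ)
    (hrel : ∀ x y z : X, ρ x y ≤ c * (ρ x z + ρ z y)) (hcompρ : SComplete ρ)
    (heq : SEquiv d ρ)
    (φ : NNReal → NNReal) (hφ : IsComparison φ)
    (T : X → X) (hT : IsPhiContraction d φ T) :
    ∃! x₀ : X, T x₀ = x₀ := by
  obtain ⟨x₀⟩ := ‹Nonempty X›
  set x : ℕ → X := fun n => T^[n] x₀ with hxdef
  have hφm : Monotone φ := hφ.1
  have hdsymm : ∀ a b : X, d a b = d b a := hd.1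
  have hd0 : ∀ a : X, d a a = 0 := fun a => (hd.2 a a).2 rfl
  have E1 : ∀ ε : NNReal, 0 < ε → ∃ δ : NNReal, 0 < δ ∧ ∀ u v, ρ u v ≤ δ → d u v < ε :=
    fun ε hε => lmod_control d ρ heq.1 hε
  have E2 : ∀ ε : NNReal, 0 < ε → ∃ δ : NNReal, 0 < δ ∧ ∀ u v, d u v ≤ δ → ρ u v < ε :=
    fun ε hε => lmod_control ρ d heq.2 hε
  have hc0 : (0:NNReal) < c := lt_of_lt_of_le zero_lt_one hc
  have hcc : (0:NNReal) < c + c := add_pos hc0 hc0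
  -- the key "regularity" lemma for d
  have hK : ∀ ε : NNReal, 0 < ε → ∃ η : NNReal, 0 < η ∧
      ∀ p a b : X, d p a ≤ η → d p b ≤ η → d a b < ε := by
    intro ε hε
    obtain ⟨δ₁, hδ₁, h1⟩ := E1 ε hε
    obtain ⟨η, hη, h2⟩ := E2 (δ₁ / (c+c)) (by positivity)
    refine ⟨η, hη, fun p a b hpa hpb => ?_⟩
    apply h1
    have hra := h2 p a hpa
    have hrb := h2 p b hpb
    calc ρ a b ≤ c * (ρ a p + ρ p b) := hrel a b p
      _ = c * (ρ p a + ρ p b) := by rw [hρ.1 a p]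
      _ ≤ c * (δ₁/(c+c) + δ₁/(c+c)) := mul_le_mul_right (add_le_add hra.le hrb.le) c
      _ = (c + c) * (δ₁/(c+c)) := by ring
      _ = δ₁ := mul_div_cancel₀ δ₁ hcc.ne'
  have hiterd : ∀ (n : ℕ) (a b : X), d (T^[n] a) (T^[n] b) ≤ φ^[n] (d a b) :=
    fun n a b => iter_contr hφm hT n a b
  -- Cauchyness of the orbit with respect to d
  have hCauchyd : ∀ α : NNReal, 0 < α → ∃ N, ∀ n m, N ≤ n → N ≤ m → d (x n) (x m) < α := by
    intro α hα
    obtain ⟨η₁, hη₁, hK1⟩ := hK α hα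
    obtain ⟨η₂', hη₂', hK2⟩ := hK η₁ hη₁
    set η₂ := min η₂' η₁ with hη₂def
    have hη₂ : 0 < η₂ := lt_min hη₂' hη₁
    obtain ⟨η₃', hη₃', hK3⟩ := hK η₂ hη₂
    set η₃ := min η₃' η₂ with hη₃def
    have hη₃ : 0 < η₃ := lt_min hη₃' hη₂
    have hη₃₂ : η₃ ≤ η₂ := min_le_right _ _
    obtain ⟨k₀, hk₀⟩ := Filter.eventually_atTop.1 ((hφ.2 η₂).eventually (gt_mem_nhds hη₃))
    set k := k₀ + 1 with hkdef
    have hkφ : φ^[k] η₂ < η₃ := hk₀ k (Nat.le_succ k₀)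
    have hkpos : 0 < k := Nat.succ_pos _
    have hNr : ∀ r : ℕ, ∃ Nr, ∀ n, Nr ≤ n → φ^[n] (d x₀ (x r)) < η₃ := fun r =>
      Filter.eventually_atTop.1 ((hφ.2 (d x₀ (x r))).eventually (gt_mem_nhds hη₃))
    set N := (Finset.range (k+1)).sup (fun r => (hNr r).choose) with hNdef
    have hNs : ∀ r, r ≤ k → φ^[N] (d x₀ (x r)) < η₃ := fun r hr =>
      (hNr r).choose_spec N (Finset.le_sup (f := fun r => (hNr r).choose) (Finset.mem_range.2 (Nat.lt_succ_of_le hr)))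
    have hcent : ∀ r, r ≤ k → d (x N) (x (N + r)) < η₃ := by
      intro r hr
      have e1 : x (N + r) = T^[N] (x r) := Function.iterate_add_apply T N r x₀
      calc d (x N) (x (N + r)) = d (T^[N] x₀) (T^[N] (x r)) := by rw [e1]
        _ ≤ φ^[N] (d x₀ (x r)) := hiterd N x₀ (x r)
        _ < η₃ := hNs r hr
    -- invariant ball
    have hC1 : ∀ j, d (x N) (x (N + j*k)) ≤ η₂ := by
      intro j
      induction j with
      | zero =>
        have e0 : N + 0*k = N := by ring
        rw [e0, hd0 (x N)]
        exact zero_le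
      | succ j ih =>
        have e2 : x (N + (j+1)*k) = T^[k] (x (N + j*k)) := by
          have : N + (j+1)*k = k + (N + j*k) := by ring
          rw [hxdef]
          simp only [this]
          exact Function.iterate_add_apply T k (N + j*k) x₀
        have e3 : x (N + k) = T^[k] (x N) := by
          have : N + k = k + N := by ring
          rw [hxdef]
          simp only [this]
          exact Function.iterate_add_apply T k N x₀
        have h1 : d (x (N+k)) (x (N + (j+1)*k)) ≤ η₃ := by
          rw [e2, e3]
          calc d (T^[k] (x N)) (T^[k] (x (N+j*k))) ≤ φ^[k] (d (x N) (x (N+j*k))) := hiterd k _ _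
            _ ≤ φ^[k] η₂ := hφm.iterate k ih
            _ ≤ η₃ := hkφ.le
        have h2 : d (x (N+k)) (x N) ≤ η₃ := by
          rw [hdsymm]
          exact (hcent k le_rfl).le
        have h3 := hK3 (x (N+k)) (x (N + (j+1)*k)) (x N)
          (h1.trans (min_le_left _ _)) (h2.trans (min_le_left _ _))
        rw [hdsymm]
        exact h3.le
    -- the whole tail is η₁-close to x N
    have hC2 : ∀ q, d (x N) (x (N + q)) < η₁ := by
      intro q
      obtain ⟨j, r, hrk, hq⟩ : ∃ j r, r < k ∧ q = j*k + r :=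
        ⟨q / k, q % k, Nat.mod_lt _ hkpos, (Nat.div_add_mod' q k).symm⟩
      have e4 : x (N + q) = T^[r] (x (N + j*k)) := by
        have harith : N + q = r + (N + j*k) := by
          rw [hq]; ring
        rw [hxdef]
        simp only [harith]
        exact Function.iterate_add_apply T r (N + j*k) x₀
      have e5 : x (N + r) = T^[r] (x N) := by
        have : N + r = r + N := by ring
        rw [hxdef]
        simp only [this]
        exact Function.iterate_add_apply T r N x₀
      have h1 : d (x (N + r)) (x (N + q)) ≤ η₂ := by
        rw [e4, e5]
        calc d (T^[r] (x N)) (T^[r] (x (N+j*k))) ≤ φ^[r] (d (x N) (x (N+j*k))) := hiterd r _ _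
          _ ≤ φ^[r] η₂ := hφm.iterate r (hC1 j)
          _ ≤ η₂ := comp_iter_le hφ r η₂
      have h2 : d (x (N + r)) (x N) ≤ η₂ := by
        rw [hdsymm]
        exact ((hcent r hrk.le).le.trans hη₃₂)
      exact hK2 (x (N+r)) (x N) (x (N+q)) (h2.trans (min_le_left _ _)) (h1.trans (min_le_left _ _))
    refine ⟨N, fun n m hn hm => ?_⟩
    have hn' : d (x N) (x n) ≤ η₁ := by
      have h := hC2 (n - N)
      rw [Nat.add_sub_cancel' hn] at h
      exact h.le
    have hm' : d (x N) (x m) ≤ η₁ := by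
      have h := hC2 (m - N)
      rw [Nat.add_sub_cancel' hm] at h
      exact h.le
    exact hK1 (x N) (x n) (x m) hn' hm'
  -- transfer Cauchy to ρ and use completeness
  have hCauchyρ : SCauchy ρ x := by
    intro ε hε
    obtain ⟨δ, hδ, h2⟩ := E2 ε hε
    obtain ⟨N, hN⟩ := hCauchyd δ hδ
    exact ⟨N, fun n m hn hm => h2 _ _ (hN n m hn hm).le⟩
  obtain ⟨a, ha⟩ := hcompρ x hCauchyρ
  have hconvd : ∀ ε : NNReal, 0 < ε → ∃ N, ∀ n, N ≤ n → d (x n) a < ε := by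
    intro ε hε
    obtain ⟨δ, hδ, h1⟩ := E1 ε hε
    have hev : ∀ᶠ n in Filter.atTop, ρ (x n) a < δ := ha.eventually (gt_mem_nhds hδ)
    obtain ⟨N, hN⟩ := Filter.eventually_atTop.1 hev
    exact ⟨N, fun n hn => h1 _ _ (hN n hn).le⟩
  have hfix : T a = a := by
    have hz : d a (T a) = 0 := by
      by_contra h
      have hpos : 0 < d a (T a) := pos_iff_ne_zero.2 h
      obtain ⟨η, hη, hK'⟩ := hK _ hpos
      obtain ⟨N, hN⟩ := hconvd η hη
      have h1 : d (x (N+1)) a ≤ η := (hN (N+1) (Nat.le_succ N)).le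
      have h2 : d (x (N+1)) (T a) ≤ η := by
        have e : x (N+1) = T (x N) := Function.iterate_succ_apply' T N x₀
        rw [e]
        calc d (T (x N)) (T a) ≤ φ (d (x N) a) := hT _ _
          _ ≤ d (x N) a := comp_le hφ _
          _ ≤ η := (hN N le_rfl).le
      exact lt_irrefl _ (hK' (x (N+1)) a (T a) h1 h2)
    exact ((hd.2 a (T a)).1 hz).symm
  refine ⟨a, hfix, fun y hy => ?_⟩
  have h1 : d y a ≤ φ (d y a) := by
    calc d y a = d (T y) (T a) := by rw [hy, hfix]
      _ ≤ φ (d y a) := hT y a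
  exact (hd.2 y a).1 (comp_fix hφ h1)
end
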